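/- arXiv:1406.1873 — 2 statements merged into one kernel-verified Lean document; each statement's English description precedes it below -/
import Mathlib

section
/- For every nonzero point x ∈ R^3, the ray spanned by the point evaluation ev_x is an extreme ray of the dual cone Σ_{2d}^∨ of the cone of sums of squares of ternary forms of degree d. -/
open MvPolynomial

/-- The space of ternary forms of degree `n`. -/
noncomputable abbrev ternaryForms (n : ℕ) : Submodule ℝ (MvPolynomial (Fin 3) ℝ) :=
  homogeneousSubmodule (Fin 3) ℝ n

/-- The square of a ternary form of degree `d`, as a form of degree `2d`. -/
noncomputable def sqForm (d : ℕ) (f : ternaryForms d) : ternaryForms (2 * d) :=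
  ⟨f.1 * f.1, by
    rw [mem_homogeneousSubmodule] at *
    simpa [two_mul] using f.2.mul f.2⟩

/-- Membership in the dual cone `Σ_{2d}^∨` of the cone of sums of squares:
a linear functional on forms of degree `2d` which is nonnegative
on every square of a degree-`d` form. -/
def InDualSOS (d : ℕ) (ℓ : ternaryForms (2 * d) →ₗ[ℝ] ℝ) : Prop :=
  ∀ f : ternaryForms d, 0 ≤ ℓ (sqForm d f)

/-- Evaluation at a point `x ∈ ℝ³`, as a linear functional on forms of degree `2d`. -/
noncomputable def evFun (d : ℕ) (x : Fin 3 → ℝ) : ternaryForms (2 * d) →ₗ[ℝ] ℝ :=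
  (aeval x).toLinearMap ∘ₗ (ternaryForms (2 * d)).subtype

/-! ### Auxiliary material -/

/-- The product of two degree-`d` forms, as a form of degree `2d`. -/
noncomputable def mulForm (d : ℕ) (f g : ternaryForms d) : ternaryForms (2 * d) :=
  ⟨f.1 * g.1, by
    rw [mem_homogeneousSubmodule] at *
    simpa [two_mul] using f.2.mul g.2⟩

lemma mulForm_comm (d : ℕ) (f g : ternaryForms d) : mulForm d f g = mulForm d g f :=
  Subtype.ext (mul_comm _ _)

lemma mulForm_sub_smul (d : ℕ) (f p g : ternaryForms d) (s : ℝ) :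
    mulForm d (f - s • p) g = mulForm d f g - s • mulForm d p g := by
  apply Subtype.ext
  simp only [mulForm, Submodule.coe_sub, Submodule.coe_smul, SetLike.mk_smul_mk, smul_eq_C_mul]
  ring

lemma sqForm_expand (d : ℕ) (f g : ternaryForms d) (t : ℝ) :
    sqForm d (f + t • g) = sqForm d f + (2*t) • mulForm d f g + (t^2) • sqForm d g := by
  apply Subtype.ext
  simp only [sqForm, mulForm, Submodule.coe_add, Submodule.coe_smul, SetLike.mk_smul_mk,
    smul_eq_C_mul, map_mul, map_ofNat, map_pow]
  ring

/-- Cauchy–Schwarz-type vanishing for positive semidefinite functionals. -/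
lemma cs_vanish (d : ℕ) (ℓ : ternaryForms (2 * d) →ₗ[ℝ] ℝ) (hdual : InDualSOS d ℓ)
    (f g : ternaryForms d) (hf : ℓ (sqForm d f) = 0) : ℓ (mulForm d f g) = 0 := by
  set a := ℓ (mulForm d f g) with ha
  set b := ℓ (sqForm d g) with hbdef
  have hb : 0 ≤ b := hdual g
  have key : ∀ t : ℝ, 0 ≤ 2*t*a + t^2 * b := by
    intro t
    have h := hdual (f + t • g)
    rw [sqForm_expand] at h
    simpa [hf, map_add, map_smul, mul_comm, mul_assoc] using h
  have hb1 : (0:ℝ) < b + 1 := by linarith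
  have h := key (-(a/(b+1)))
  have h2 : a^2 ≤ 0 := by
    have hba : a^2 * b ≥ 0 := mul_nonneg (sq_nonneg a) hb
    field_simp at h
    have hD : (0:ℝ) < (b + 1) * (b + 1)^2 := by positivity
    nlinarith [sq_nonneg a]
  have ha2 : a^2 = 0 := le_antisymm h2 (sq_nonneg a)
  exact pow_eq_zero_iff two_ne_zero |>.mp ha2

lemma degree_fin3 (α : Fin 3 →₀ ℕ) : α.degree = α 0 + α 1 + α 2 := by
  rw [Finsupp.degree_apply]
  rw [Finset.sum_subset (Finset.subset_univ _) (fun i _ hi => Finsupp.notMem_support_iff.mp hi)]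
  exact Fin.sum_univ_three _

/-- Every exponent of degree `2d` splits into two exponents of degree `d`. -/
lemma split_exponent (d : ℕ) (α : Fin 3 →₀ ℕ) (hα : α.degree = 2 * d) :
    ∃ β γ : Fin 3 →₀ ℕ, β.degree = d ∧ γ.degree = d ∧ β + γ = α := by
  rw [degree_fin3] at hα
  set b0 := min (α 0) d with hb0
  set b1 := min (α 1) (d - b0) with hb1
  set b2 := d - b0 - b1 with hb2
  refine ⟨Finsupp.equivFunOnFinite.symm ![b0, b1, b2],
    Finsupp.equivFunOnFinite.symm ![α 0 - b0, α 1 - b1, α 2 - b2], ?_, ?_, ?_⟩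
  · rw [degree_fin3]; simp [Finsupp.coe_equivFunOnFinite_symm]; omega
  · rw [degree_fin3]; simp [Finsupp.coe_equivFunOnFinite_symm]; omega
  · ext i
    fin_cases i <;> simp [Finsupp.coe_equivFunOnFinite_symm] <;> omega

/-- The key lemma: any element of the dual cone dominated by `ev_x` on squares
is a nonnegative multiple of `ev_x`. -/
lemma key_lemma (d : ℕ) (x : Fin 3 → ℝ) (hx : x ≠ 0)
    (ℓ : ternaryForms (2 * d) →ₗ[ℝ] ℝ) (hdual : InDualSOS d ℓ)
    (hle : ∀ f : ternaryForms d, ℓ (sqForm d f) ≤ (aeval x f.1)^2) :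
    ∃ c : ℝ, 0 ≤ c ∧ ℓ = c • evFun d x := by
  obtain ⟨j, hj⟩ := Function.ne_iff.mp hx
  rw [Pi.zero_apply] at hj
  set p : ternaryForms d := ⟨(X j : MvPolynomial (Fin 3) ℝ)^d, by
    rw [mem_homogeneousSubmodule]; exact isHomogeneous_X_pow j d⟩ with hp
  have hpx : aeval x p.1 = x j ^ d := by simp [hp]
  have hpx0 : aeval x p.1 ≠ 0 := by rw [hpx]; exact pow_ne_zero _ hj
  set px := aeval x p.1 with hpxdef
  set c := ℓ (sqForm d p) / px^2 with hc
  have hc0 : 0 ≤ c := div_nonneg (hdual p) (sq_nonneg _)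
  -- vanishing on squares of forms vanishing at x
  have hzero : ∀ f : ternaryForms d, aeval x f.1 = 0 → ℓ (sqForm d f) = 0 := by
    intro f hf
    exact le_antisymm (by simpa [hf] using hle f) (hdual f)
  -- reduction
  have hred : ∀ f g : ternaryForms d,
      ℓ (mulForm d f g) = (aeval x f.1 / px) * ℓ (mulForm d p g) := by
    intro f g
    set s := aeval x f.1 / px with hs
    have hf' : aeval x (f - s • p).1 = 0 := by
      simp only [Submodule.coe_sub, Submodule.coe_smul, map_sub, map_smul, smul_eq_mul, hs]
      field_simp
      rw [← hpxdef, hpx]; ring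
    have h1 := cs_vanish d ℓ hdual _ g (hzero _ hf')
    rw [mulForm_sub_smul] at h1
    simp only [map_sub, map_smul, smul_eq_mul] at h1
    linarith
  have hmul : ∀ f g : ternaryForms d,
      ℓ (mulForm d f g) = c * (aeval x f.1 * aeval x g.1) := by
    intro f g
    rw [hred f g, mulForm_comm, hred g p, mulForm_comm]
    show _ * (_ * ℓ (sqForm d p)) = _
    rw [hc]
    field_simp
  -- extend to all of ternaryForms (2d)
  refine ⟨c, hc0, ?_⟩
  apply LinearMap.ext
  intro h
  have hhom : IsHomogeneous h.1 (2*d) := (mem_homogeneousSubmodule _ _).mp h.2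
  have hmem : ∀ a : h.1.support,
      (monomial a.1 (1:ℝ) : MvPolynomial (Fin 3) ℝ) ∈ ternaryForms (2*d) := by
    intro a
    rw [mem_homogeneousSubmodule]
    apply isHomogeneous_monomial
    rw [Finsupp.degree_eq_weight_one]
    exact hhom (mem_support_iff.mp a.2)
  have hdecomp : h = ∑ a ∈ h.1.support.attach,
      coeff a.1 h.1 • (⟨monomial a.1 1, hmem a⟩ : ternaryForms (2*d)) := by
    apply Subtype.ext
    push_cast
    rw [Finset.sum_attach h.1.support (fun α => coeff α h.1 • (monomial α (1:ℝ)))]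
    simp_rw [smul_monomial, smul_eq_mul, mul_one]
    exact (support_sum_monomial_coeff h.1).symm
  have hmono : ∀ a : h.1.support,
      ℓ ⟨monomial a.1 1, hmem a⟩ = c * aeval x (monomial a.1 (1:ℝ)) := by
    intro a
    have hdeg : a.1.degree = 2*d := by
      rw [Finsupp.degree_eq_weight_one]; exact hhom (mem_support_iff.mp a.2)
    obtain ⟨β, γ, hβ, hγ, hβγ⟩ := split_exponent d a.1 hdeg
    set fβ : ternaryForms d := ⟨monomial β 1, by
      rw [mem_homogeneousSubmodule]; exact isHomogeneous_monomial _ hβ⟩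
    set fγ : ternaryForms d := ⟨monomial γ 1, by
      rw [mem_homogeneousSubmodule]; exact isHomogeneous_monomial _ hγ⟩
    have hprod : mulForm d fβ fγ = ⟨monomial a.1 1, hmem a⟩ := by
      apply Subtype.ext
      show (monomial β 1 : MvPolynomial (Fin 3) ℝ) * monomial γ 1 = monomial a.1 1
      rw [monomial_mul, one_mul, hβγ]
    rw [← hprod, hmul fβ fγ]
    congr 1
    show aeval x (monomial β (1:ℝ)) * aeval x (monomial γ 1) = _
    rw [← map_mul, monomial_mul, one_mul, hβγ]
  rw [hdecomp, map_sum, map_sum]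
  apply Finset.sum_congr rfl
  intro a _
  rw [map_smul, map_smul, hmono a]
  simp only [LinearMap.smul_apply, smul_eq_mul, evFun, LinearMap.coe_comp, Function.comp_apply,
    Submodule.coe_subtype, AlgHom.toLinearMap_apply]

/-- for every nonzero `x ∈ ℝ³`, the ray spanned by the point
evaluation `ev_x` is an extreme ray of the dual cone `Σ_{2d}^∨`. -/
theorem stmt2 (d : ℕ) (x : Fin 3 → ℝ) (hx : x ≠ 0) :
    ∀ ℓ₁ ℓ₂ : ternaryForms (2 * d) →ₗ[ℝ] ℝ,
      InDualSOS d ℓ₁ → InDualSOS d ℓ₂ → evFun d x = ℓ₁ + ℓ₂ →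
        ∃ c₁ c₂ : ℝ, 0 ≤ c₁ ∧ 0 ≤ c₂ ∧
          ℓ₁ = c₁ • evFun d x ∧ ℓ₂ = c₂ • evFun d x := by
  intro ℓ₁ ℓ₂ h1 h2 hsum
  have hev : ∀ f : ternaryForms d, evFun d x (sqForm d f) = (aeval x f.1)^2 := by
    intro f
    simp [evFun, sqForm, sq]
  have hle1 : ∀ f : ternaryForms d, ℓ₁ (sqForm d f) ≤ (aeval x f.1)^2 := by
    intro f
    have hs := congrArg (fun L : ternaryForms (2*d) →ₗ[ℝ] ℝ => L (sqForm d f)) hsum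
    simp only [LinearMap.add_apply] at hs
    have h2f := h2 f
    rw [hev f] at hs
    linarith
  have hle2 : ∀ f : ternaryForms d, ℓ₂ (sqForm d f) ≤ (aeval x f.1)^2 := by
    intro f
    have hs := congrArg (fun L : ternaryForms (2*d) →ₗ[ℝ] ℝ => L (sqForm d f)) hsum
    simp only [LinearMap.add_apply] at hs
    have h1f := h1 f
    rw [hev f] at hs
    linarith
  obtain ⟨c₁, hc₁, heq₁⟩ := key_lemma d x hx ℓ₁ h1 hle1
  obtain ⟨c₂, hc₂, heq₂⟩ := key_lemma d x hx ℓ₂ h2 hle2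
  exact ⟨c₁, c₂, hc₁, hc₂, heq₁, heq₂⟩
end

section
/- Let d ≥ 4 and let Γ_2 = {(x,y) ∈ {0,…,d−1}² : x+y = 2 or x+y = d+j for some 1 ≤ j ≤ d−4}. Then every polynomial f ∈ R[x,y] of total degree at most d−3 vanishing at all points of Γ_2 is a scalar multiple of (x+y−2)·∏_{j=1}^{d−4}(x+y−(d+j)). -/
open MvPolynomial Finset

namespace Stmt9Aux

lemma eq_C_of_totalDegree_eq_zero (p : MvPolynomial (Fin 2) ℝ) (h : p.totalDegree = 0) :
    p = C (coeff 0 p) := by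
  ext m
  rcases eq_or_ne m 0 with hm | hm
  · simp [hm]
  · rw [coeff_C, if_neg (fun h' => hm h'.symm)]
    by_contra hc
    have hmem : m ∈ p.support := mem_support_iff.2 hc
    have := (totalDegree_eq_zero_iff _ p).1 h m hmem
    exact hm (Finsupp.ext fun x => this x)

lemma natDegree_aeval_le (g : Fin 2 → Polynomial ℝ) (hg : ∀ i, (g i).natDegree ≤ 1)
    (f : MvPolynomial (Fin 2) ℝ) : (aeval g f).natDegree ≤ f.totalDegree := by
  conv_lhs => rw [f.as_sum]
  rw [map_sum]
  apply Polynomial.natDegree_sum_le_of_forall_le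
  intro m hm
  rw [aeval_monomial]
  calc ((algebraMap ℝ (Polynomial ℝ)) (coeff m f) * m.prod fun i e => g i ^ e).natDegree
      ≤ ((algebraMap ℝ (Polynomial ℝ)) (coeff m f)).natDegree
        + (m.prod fun i e => g i ^ e).natDegree := Polynomial.natDegree_mul_le
    _ = (m.prod fun i e => g i ^ e).natDegree := by
        rw [Polynomial.algebraMap_eq, Polynomial.natDegree_C, zero_add]
    _ ≤ ∑ i ∈ m.support, (g i ^ m i).natDegree := by
        rw [Finsupp.prod]; exact Polynomial.natDegree_prod_le _ _
    _ ≤ ∑ i ∈ m.support, m i := by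
        refine Finset.sum_le_sum fun i _ => le_trans Polynomial.natDegree_pow_le ?_
        calc m i * (g i).natDegree ≤ m i * 1 := Nat.mul_le_mul_left _ (hg i)
          _ = m i := Nat.mul_one _
    _ ≤ f.totalDegree := le_totalDegree hm

lemma totalDegree_aeval_le (g : Fin 2 → MvPolynomial (Fin 2) ℝ)
    (hg : ∀ i, (g i).totalDegree ≤ 1)
    (f : MvPolynomial (Fin 2) ℝ) : (aeval g f).totalDegree ≤ f.totalDegree := by
  conv_lhs => rw [f.as_sum]
  rw [map_sum]
  apply totalDegree_finsetSum_le
  intro m hm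
  calc ((aeval g) (monomial m (coeff m f))).totalDegree
      = ((algebraMap ℝ (MvPolynomial (Fin 2) ℝ)) (coeff m f)
          * m.prod fun i e => g i ^ e).totalDegree := by rw [aeval_monomial]
    _ ≤ ((algebraMap ℝ (MvPolynomial (Fin 2) ℝ)) (coeff m f)).totalDegree
        + (m.prod fun i e => g i ^ e).totalDegree := totalDegree_mul _ _
    _ = (m.prod fun i e => g i ^ e).totalDegree := by
        rw [MvPolynomial.algebraMap_eq, totalDegree_C, zero_add]
    _ ≤ ∑ i ∈ m.support, (g i ^ m i).totalDegree := by
        rw [Finsupp.prod]; exact totalDegree_finset_prod _ _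
    _ ≤ ∑ i ∈ m.support, m i := by
        refine Finset.sum_le_sum fun i _ => le_trans (totalDegree_pow _ _) ?_
        calc m i * (g i).totalDegree ≤ m i * 1 := Nat.mul_le_mul_left _ (hg i)
          _ = m i := Nat.mul_one _
    _ ≤ f.totalDegree := le_totalDegree hm

lemma totalDegree_X_mul_ge {h : MvPolynomial (Fin 2) ℝ} (hh : h ≠ 0) :
    h.totalDegree + 1 ≤ (X 0 * h).totalDegree := by
  obtain ⟨m, hm, hdeg⟩ := Finset.exists_mem_eq_sup h.support (support_nonempty.2 hh)
    (fun m => m.sum fun _ e => e)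
  have hc : coeff (Finsupp.single 0 1 + m) (X (0 : Fin 2) * h) = coeff m h := coeff_X_mul m 0 h
  have hmem : Finsupp.single 0 1 + m ∈ (X (0 : Fin 2) * h).support :=
    mem_support_iff.2 (by rw [hc]; exact mem_support_iff.1 hm)
  have hle := le_totalDegree hmem
  rw [Finsupp.sum_add_index' (fun _ => rfl) (fun _ _ _ => rfl),
    Finsupp.sum_single_index rfl] at hle
  have hdeg' : h.totalDegree = m.sum fun _ e => e := hdeg
  omega

lemma totalDegree_linear_mul_ge (s0 : ℝ) (g : MvPolynomial (Fin 2) ℝ) (hg : g ≠ 0) :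
    g.totalDegree + 1 ≤ ((X 0 + X 1 - C s0) * g).totalDegree := by
  set A : MvPolynomial (Fin 2) ℝ →ₐ[ℝ] MvPolynomial (Fin 2) ℝ :=
    aeval ![X 0 - X 1 + C s0, X 1] with hA
  set B : MvPolynomial (Fin 2) ℝ →ₐ[ℝ] MvPolynomial (Fin 2) ℝ :=
    aeval ![X 0 + X 1 - C s0, X 1] with hB
  have hBA : ∀ p, B (A p) = p := by
    intro p
    have hcomp : B.comp A = AlgHom.id ℝ _ := by
      apply MvPolynomial.algHom_ext
      intro i
      fin_cases i <;>
        simp [hA, hB, map_sub, map_add] <;> ring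
    calc B (A p) = (B.comp A) p := rfl
      _ = p := by rw [hcomp]; rfl
  have hAdeg : ∀ p : MvPolynomial (Fin 2) ℝ, (A p).totalDegree ≤ p.totalDegree := by
    intro p
    refine totalDegree_aeval_le _ ?_ p
    intro i; fin_cases i
    · show (X 0 - X 1 + C s0 : MvPolynomial (Fin 2) ℝ).totalDegree ≤ 1
      refine le_trans (totalDegree_add _ _)
        (max_le (le_trans (totalDegree_sub _ _) ?_) ?_) <;>
        simp [totalDegree_X, totalDegree_C]
    · show (X 1 : MvPolynomial (Fin 2) ℝ).totalDegree ≤ 1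
      simp [totalDegree_X]
  have hBdeg : ∀ p : MvPolynomial (Fin 2) ℝ, (B p).totalDegree ≤ p.totalDegree := by
    intro p
    refine totalDegree_aeval_le _ ?_ p
    intro i; fin_cases i
    · show (X 0 + X 1 - C s0 : MvPolynomial (Fin 2) ℝ).totalDegree ≤ 1
      refine le_trans (totalDegree_sub _ _)
        (max_le (le_trans (totalDegree_add _ _) ?_) ?_) <;>
        simp [totalDegree_X, totalDegree_C]
    · show (X 1 : MvPolynomial (Fin 2) ℝ).totalDegree ≤ 1
      simp [totalDegree_X]
  have hAL : A (X 0 + X 1 - C s0) = X 0 := by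
    simp [hA, map_sub, map_add]
    ring
  have hAf : A ((X 0 + X 1 - C s0) * g) = X 0 * A g := by rw [map_mul, hAL]
  have hAg0 : A g ≠ 0 := fun h => hg (by rw [← hBA g, h, map_zero])
  have hx : (A g).totalDegree + 1 ≤ (X 0 * A g).totalDegree := totalDegree_X_mul_ge hAg0
  have h1 : g.totalDegree ≤ (A g).totalDegree := by
    calc g.totalDegree = (B (A g)).totalDegree := by rw [hBA]
      _ ≤ (A g).totalDegree := hBdeg _
  have h2 : (X 0 * A g).totalDegree ≤ ((X 0 + X 1 - C s0) * g).totalDegree := by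
    calc (X 0 * A g).totalDegree = (A ((X 0 + X 1 - C s0) * g)).totalDegree := by rw [hAf]
      _ ≤ _ := hAdeg _
  omega

lemma eval_aeval_line (s0 t : ℝ) (f : MvPolynomial (Fin 2) ℝ) :
    Polynomial.eval t (aeval ![Polynomial.C s0 - Polynomial.X, Polynomial.X] f)
      = eval ![s0 - t, t] f := by
  induction f using MvPolynomial.induction_on with
  | C r => simp
  | add p q hp hq => simp [hp, hq]
  | mul_X p i hp =>
      rw [map_mul, Polynomial.eval_mul, hp, map_mul]
      congr 1
      fin_cases i <;> simp

lemma dvd_of_restrict_eq_zero (s0 : ℝ) (f : MvPolynomial (Fin 2) ℝ)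
    (h : (aeval ![Polynomial.C s0 - Polynomial.X, Polynomial.X] f : Polynomial ℝ) = 0) :
    (X 0 + X 1 - C s0) ∣ f := by
  set a : MvPolynomial (Fin 1) ℝ := C s0 - X 0 with ha
  have key : ∀ p : MvPolynomial (Fin 2) ℝ,
      (aeval ![C s0 - X 0, X 0] p : MvPolynomial (Fin 1) ℝ)
        = Polynomial.eval a (finSuccEquiv ℝ 1 p) := by
    intro p
    induction p using MvPolynomial.induction_on with
    | C r => simp [finSuccEquiv_apply]
    | add p q hp hq => rw [map_add, map_add, Polynomial.eval_add, hp, hq]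
    | mul_X p i hp =>
        rw [map_mul, map_mul, Polynomial.eval_mul, hp]
        congr 1
        fin_cases i
        · rw [show ((⟨0, by norm_num⟩ : Fin 2)) = (0 : Fin 2) from rfl, finSuccEquiv_X_zero]
          simp [ha]
        · rw [show ((⟨1, by norm_num⟩ : Fin 2)) = Fin.succ 0 from rfl, finSuccEquiv_X_succ]
          simp
  let ψ : MvPolynomial (Fin 1) ℝ ≃ₐ[ℝ] Polynomial ℝ :=
    (renameEquiv ℝ (Equiv.equivPUnit.{_, 1} (Fin 1))).trans (pUnitAlgEquiv ℝ)
  have hψ : (ψ.toAlgHom.comp (aeval ![C s0 - X 0, X 0]) :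
        MvPolynomial (Fin 2) ℝ →ₐ[ℝ] Polynomial ℝ)
      = aeval ![Polynomial.C s0 - Polynomial.X, Polynomial.X] := by
    apply MvPolynomial.algHom_ext
    intro i
    fin_cases i <;>
      simp [ψ, pUnitAlgEquiv, renameEquiv_apply, map_sub, rename_X, rename_C,
        MvPolynomial.eval₂_sub]
  have h2 : (aeval ![C s0 - X 0, X 0] f : MvPolynomial (Fin 1) ℝ) = 0 := by
    apply ψ.injective
    have := congrArg (fun φ : MvPolynomial (Fin 2) ℝ →ₐ[ℝ] Polynomial ℝ => φ f) hψ
    simp only [AlgHom.coe_comp, Function.comp_apply, AlgEquiv.toAlgHom_eq_coe,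
      AlgHom.coe_coe] at this
    exact this.trans (h.trans (map_zero ψ).symm)
  have h3 : Polynomial.eval a (finSuccEquiv ℝ 1 f) = 0 := by rw [← key]; exact h2
  have h4 : (Polynomial.X - Polynomial.C a) ∣ finSuccEquiv ℝ 1 f :=
    (Polynomial.dvd_iff_isRoot).2 h3
  have h5 : finSuccEquiv ℝ 1 (X 0 + X 1 - C s0) = Polynomial.X - Polynomial.C a := by
    have hC : finSuccEquiv ℝ 1 (C s0 : MvPolynomial (Fin 2) ℝ) = Polynomial.C (C s0) := by
      simp [finSuccEquiv_apply]
    rw [map_sub, map_add, finSuccEquiv_X_zero,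
      show (1 : Fin 2) = Fin.succ 0 from rfl, finSuccEquiv_X_succ, hC, ha]
    rw [map_sub]
    ring
  obtain ⟨q, hq⟩ := h4
  refine ⟨(finSuccEquiv ℝ 1).symm q, ?_⟩
  apply (finSuccEquiv ℝ 1).injective
  rw [map_mul, h5, AlgEquiv.apply_symm_apply, hq]

lemma key : ∀ (n : ℕ) (f : MvPolynomial (Fin 2) ℝ) (s : Fin n → ℝ) (T : Fin n → Finset ℝ),
    Function.Injective s →
    (∀ i : Fin n, n + 1 ≤ (T i).card + (i : ℕ)) →
    f.totalDegree ≤ n →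
    (∀ i : Fin n, ∀ t ∈ T i, eval ![s i - t, t] f = 0) →
    ∃ c : ℝ, f = c • ∏ i, (X 0 + X 1 - C (s i)) := by
  intro n
  induction n with
  | zero =>
      intro f s T _ _ hdeg _
      have hf : f = C (coeff 0 f) :=
        eq_C_of_totalDegree_eq_zero f (Nat.le_zero.1 hdeg)
      refine ⟨coeff 0 f, hf.trans ?_⟩
      simp [smul_eq_C_mul]
  | succ n ih =>
      intro f s T hs hcard hdeg hvan
      by_cases hf0 : f = 0
      · exact ⟨0, by simp [hf0]⟩
      have hent : ∀ i : Fin 2,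
          ((![Polynomial.C (s 0) - Polynomial.X, Polynomial.X] : Fin 2 → Polynomial ℝ) i).natDegree ≤ 1 := by
        intro i; fin_cases i
        · refine le_trans (Polynomial.natDegree_sub_le _ _) ?_
          simp
        · simp
      have hρ0 : (aeval ![Polynomial.C (s 0) - Polynomial.X, Polynomial.X] f : Polynomial ℝ) = 0 := by
        apply Polynomial.eq_zero_of_natDegree_lt_card_of_eval_eq_zero' _ (T 0)
        · intro t ht; rw [eval_aeval_line]; exact hvan 0 t ht
        · have h1 := natDegree_aeval_le _ hent f
          have h2 := hcard 0
          have h3 : ((0 : Fin (n + 1)) : ℕ) = 0 := rfl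
          omega
      obtain ⟨g, hfg⟩ := dvd_of_restrict_eq_zero (s 0) f hρ0
      have hg0 : g ≠ 0 := fun hz => hf0 (by rw [hfg, hz, mul_zero])
      have hgdeg : g.totalDegree ≤ n := by
        have h1 := totalDegree_linear_mul_ge (s 0) g hg0
        rw [← hfg] at h1
        omega
      have hvg : ∀ i : Fin n, ∀ t ∈ T i.succ, eval ![s i.succ - t, t] g = 0 := by
        intro i t ht
        have h0 := hvan i.succ t ht
        rw [hfg, map_mul] at h0
        have hL : eval ![s i.succ - t, t] (X 0 + X 1 - C (s 0)) = s i.succ - s 0 := by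
          simp only [map_sub, map_add, eval_X, eval_C, Matrix.cons_val_zero,
            Matrix.cons_val_one, Matrix.head_cons]
          ring
        rw [hL] at h0
        have hne : s i.succ - s 0 ≠ 0 :=
          sub_ne_zero.2 fun hss => (Fin.succ_ne_zero i) (hs hss)
        rcases mul_eq_zero.1 h0 with hbad | hgood
        · exact absurd hbad hne
        · exact hgood
      obtain ⟨c, hc⟩ := ih g (fun i => s i.succ) (fun i => T i.succ)
        (fun i j hsij => Fin.succ_injective _ (hs hsij))
        (by
          intro i
          have h1 := hcard i.succ
          have h2 : ((i.succ : Fin (n + 1)) : ℕ) = (i : ℕ) + 1 := Fin.val_succ i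
          show n + 1 ≤ (T i.succ).card + (i : ℕ)
          omega)
        hgdeg hvg
      refine ⟨c, ?_⟩
      rw [hfg, hc, Fin.prod_univ_succ, smul_eq_C_mul, smul_eq_C_mul]
      ring

lemma prod_Icc_one {M : Type*} [CommMonoid M] (m : ℕ) (F : ℕ → M) :
    ∏ j ∈ Finset.Icc 1 m, F j = ∏ i ∈ Finset.range m, F (1 + i) := by
  induction m with
  | zero => simp
  | succ m ih =>
      rw [Finset.prod_Icc_succ_top (Nat.le_add_left 1 m), ih, Finset.prod_range_succ]
      congr 1
      rw [Nat.add_comm]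

end Stmt9Aux

open Stmt9Aux in
/-- let `d ≥ 4` and let `Γ₂` be the set of points of the grid
`{0,…,d−1}²` lying on the line `x+y = 2` or one of the lines `x+y = d+j`,
`1 ≤ j ≤ d−4`.  Every polynomial `f ∈ ℝ[x,y]` of total degree at most `d−3`
vanishing on `Γ₂` is a scalar multiple of
`(x+y−2)·∏_{j=1}^{d−4}(x+y−(d+j))`. -/
theorem stmt9 (d : ℕ) (hd : 4 ≤ d) (f : MvPolynomial (Fin 2) ℝ)
    (hdeg : f.totalDegree ≤ d - 3)
    (hvan : ∀ a b : ℕ, a < d → b < d →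
      (a + b = 2 ∨ ∃ j, 1 ≤ j ∧ j ≤ d - 4 ∧ a + b = d + j) →
      eval ![(a : ℝ), (b : ℝ)] f = 0) :
    ∃ c : ℝ, f = c • ((X 0 + X 1 - C 2) *
      ∏ j ∈ Finset.Icc 1 (d - 4), (X 0 + X 1 - C ((d : ℝ) + (j : ℝ)))) := by
  set m := d - 4 with hm4
  have hdR : (4 : ℝ) ≤ (d : ℝ) := by exact_mod_cast hd
  set s : Fin (m + 1) → ℝ :=
    fun i => if (i : ℕ) < m then (d : ℝ) + 1 + ((i : ℕ) : ℝ) else 2 with hsdef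
  set T : Fin (m + 1) → Finset ℝ :=
    fun i => if (i : ℕ) < m then (Finset.Icc ((i : ℕ) + 2) (d - 1)).image (Nat.cast : ℕ → ℝ)
      else ({0, 1, 2} : Finset ℕ).image (Nat.cast : ℕ → ℝ) with hTdef
  have hinj : Function.Injective s := by
    intro i j hij
    have hi1 := i.isLt
    have hj1 := j.isLt
    by_cases hi : (i : ℕ) < m <;> by_cases hj : (j : ℕ) < m <;>
      simp only [hsdef, hi, hj, if_true, if_false, if_pos, if_neg, not_false_iff] at hij
    · have : ((i : ℕ) : ℝ) = ((j : ℕ) : ℝ) := by linarith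
      have : (i : ℕ) = (j : ℕ) := by exact_mod_cast this
      exact Fin.ext this
    · exfalso
      have : (0 : ℝ) ≤ ((i : ℕ) : ℝ) := Nat.cast_nonneg _
      linarith
    · exfalso
      have : (0 : ℝ) ≤ ((j : ℕ) : ℝ) := Nat.cast_nonneg _
      linarith
    · have : (i : ℕ) = (j : ℕ) := by omega
      exact Fin.ext this
  have hcard : ∀ i : Fin (m + 1), (m + 1) + 1 ≤ (T i).card + (i : ℕ) := by
    intro i
    have hi1 := i.isLt
    by_cases hi : (i : ℕ) < m
    · rw [hTdef]
      simp only [hi, if_true]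
      rw [Finset.card_image_of_injective _ Nat.cast_injective, Nat.card_Icc]
      omega
    · rw [hTdef]
      simp only [hi, if_false]
      rw [Finset.card_image_of_injective _ Nat.cast_injective]
      have h3 : ({0, 1, 2} : Finset ℕ).card = 3 := by decide
      omega
  have hdeg' : f.totalDegree ≤ m + 1 := hdeg.trans (by omega)
  have hvan' : ∀ i : Fin (m + 1), ∀ t ∈ T i, eval ![s i - t, t] f = 0 := by
    intro i t ht
    have hi1 := i.isLt
    by_cases hi : (i : ℕ) < m
    · rw [hTdef] at ht
      simp only [hi, if_true, Finset.mem_image] at ht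
      obtain ⟨b, hb, rfl⟩ := ht
      rw [Finset.mem_Icc] at hb
      have hbd : b ≤ d + 1 + (i : ℕ) := by omega
      have hkey : s i - (b : ℝ) = ((d + 1 + (i : ℕ) - b : ℕ) : ℝ) := by
        rw [hsdef]
        simp only [hi, if_true]
        rw [Nat.cast_sub hbd]
        push_cast
        ring
      rw [hkey]
      apply hvan (d + 1 + (i : ℕ) - b) b (by omega) (by omega)
      right
      exact ⟨1 + (i : ℕ), by omega, by omega, by omega⟩
    · rw [hTdef] at ht
      simp only [hi, if_false, Finset.mem_image] at ht
      obtain ⟨b, hb, rfl⟩ := ht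
      simp only [Finset.mem_insert, Finset.mem_singleton] at hb
      have hb3 : b ≤ 2 := by rcases hb with rfl | rfl | rfl <;> omega
      have hkey : s i - (b : ℝ) = ((2 - b : ℕ) : ℝ) := by
        rw [hsdef]
        simp only [hi, if_false]
        rw [Nat.cast_sub hb3]
        push_cast
        ring
      rw [hkey]
      apply hvan (2 - b) b (by omega) (by omega)
      left
      omega
  obtain ⟨c, hc⟩ := key (m + 1) f s T hinj hcard hdeg' hvan'
  refine ⟨c, hc.trans ?_⟩
  congr 1
  have hlast : s (Fin.last m) = 2 := by
    rw [hsdef]; simp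
  have hcs : ∀ i : Fin m, s i.castSucc = (d : ℝ) + 1 + ((i : ℕ) : ℝ) := by
    intro i
    rw [hsdef]
    simp [Fin.coe_castSucc, i.isLt]
  rw [Fin.prod_univ_castSucc, hlast, mul_comm]
  congr 1
  rw [prod_Icc_one m (fun j => (X 0 + X 1 - C ((d : ℝ) + (j : ℝ)) : MvPolynomial (Fin 2) ℝ)),
    ← Fin.prod_univ_eq_prod_range]
  apply Finset.prod_congr rfl
  intro i _
  rw [hcs i]
  congr 1
  push_cast
  ring
end
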